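/- arXiv:math/0605587 — 2 statements merged into one kernel-verified Lean document; each statement's English description precedes it below -/
import Mathlib

section
/- Let G be a compact Lie group with Lie algebra 𝔤. The map Φ(V,c,V̄,c̄,X) = (V, c·𝔯(V̄)·c^{-1}, X) maps Z^{ℓ,1}_{YM}(G) surjectively onto X^{2ℓ,0}_{YM}(G) = {(W, X) ∈ G^{4ℓ} × 𝔤 | W ∈ (G_X)^{4ℓ}, 𝔪(W) = exp(X)} (identifying G^{2ℓ}×G^{2ℓ} with G^{4ℓ}). -/
/-- Abstraction of a Lie group `G` with Lie algebra `𝔤`, exponential map `exp`,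
and adjoint representation `Ad`, satisfying the standard identities
`exp (Ad g X) = g * exp X * g⁻¹` and one-parameter subgroup additivity. -/
structure LieExpAd (G 𝔤 : Type*) [Group G] [TopologicalSpace G]
    [AddCommGroup 𝔤] [Module ℝ 𝔤] where
  exp : 𝔤 → G
  Ad : G →* (𝔤 ≃ₗ[ℝ] 𝔤)
  exp_Ad : ∀ (g : G) (X : 𝔤), exp (Ad g X) = g * exp X * g⁻¹
  exp_add_smul : ∀ (r s : ℝ) (X : 𝔤), exp ((r + s) • X) = exp (r • X) * exp (s • X)

variable {G 𝔤 : Type*} [Group G] [TopologicalSpace G] [IsTopologicalGroup G]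
  [AddCommGroup 𝔤] [Module ℝ 𝔤]

open scoped commutatorElement

/-- `𝔪(a₁,b₁,…,a_ℓ,b_ℓ) = ∏ᵢ [aᵢ,bᵢ]` (ordered product of commutators). -/
def mm {ℓ : ℕ} (V : Fin ℓ → G × G) : G :=
  (List.ofFn fun i => ⁅(V i).1, (V i).2⁆).prod

/-- `𝔯(a₁,b₁,…,a_ℓ,b_ℓ) = (b_ℓ,a_ℓ,…,b₁,a₁)`. -/
def rr {ℓ : ℕ} (V : Fin ℓ → G × G) : Fin ℓ → G × G :=
  fun i => ((V i.rev).2, (V i.rev).1)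

/-- Entrywise conjugation `g V g⁻¹` of a tuple. -/
def conjT {ℓ : ℕ} (g : G) (V : Fin ℓ → G × G) : Fin ℓ → G × G :=
  fun i => (g * (V i).1 * g⁻¹, g * (V i).2 * g⁻¹)

/-- The adjoint stabilizer `G_X = {g | Ad(g)X = X}`. -/
def stab (L : LieExpAd G 𝔤) (X : 𝔤) : Set G := {g | L.Ad g X = X}

/-- All entries of the tuple `V` lie in `G_X`. -/
def tupleStab (L : LieExpAd G 𝔤) (X : 𝔤) {ℓ : ℕ} (V : Fin ℓ → G × G) : Prop :=
  ∀ i, (V i).1 ∈ stab L X ∧ (V i).2 ∈ stab L X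

/-- Membership in the symmetric representation variety `Z^{ℓ,1}_{YM}(G)`. -/
def memZ1 (L : LieExpAd G 𝔤) {ℓ : ℕ} (V : Fin ℓ → G × G) (c : G)
    (Vb : Fin ℓ → G × G) (cb : G) (X : 𝔤) : Prop :=
  tupleStab L X V ∧ tupleStab L X (conjT c Vb) ∧
  mm V = L.exp ((1/2 : ℝ) • X) * (c * cb) ∧
  mm Vb = cb * L.exp (-((1/2 : ℝ) • X)) * c

/-- Membership in the symmetric representation variety `Z^{ℓ,2}_{YM}(G)`. -/
def memZ2 (L : LieExpAd G 𝔤) {ℓ : ℕ} (V : Fin ℓ → G × G) (d c : G)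
    (Vb : Fin ℓ → G × G) (db cb : G) (X : 𝔤) : Prop :=
  tupleStab L X V ∧ tupleStab L X (conjT (d⁻¹ * c) Vb) ∧
  d⁻¹ ∈ stab L X ∧ c * cb ∈ stab L X ∧
  mm V = L.exp ((1/2 : ℝ) • X) * (c * db * c⁻¹ * d) ∧
  mm Vb = cb * d * L.exp (-((1/2 : ℝ) • X)) * cb⁻¹ * db

/-- The set `Z^{ℓ,1}_{YM}(G)`. -/
def Z1set (L : LieExpAd G 𝔤) (ℓ : ℕ) :
    Set ((Fin ℓ → G × G) × G × (Fin ℓ → G × G) × G × 𝔤) :=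
  {z | memZ1 L z.1 z.2.1 z.2.2.1 z.2.2.2.1 z.2.2.2.2}

/-- The Yang–Mills representation variety `X^{n,0}_{YM}(G)` (here `n` pairs,
i.e. `G^{2n}`), `{(W,X) | W ∈ (G_X)^{2n}, 𝔪(W) = exp X}`. -/
def XymSet (L : LieExpAd G 𝔤) (n : ℕ) : Set ((Fin n → G × G) × 𝔤) :=
  {w | tupleStab L w.2 w.1 ∧ mm w.1 = L.exp w.2}

set_option linter.unusedSectionVars false

section Helpers

variable (L : LieExpAd G 𝔤) (X : 𝔤)

lemma exp_zero : L.exp (0 : 𝔤) = 1 := by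
  have h := L.exp_add_smul 0 0 (0 : 𝔤)
  simp only [add_zero, zero_smul] at h
  exact (left_eq_mul.mp h)

lemma exp_smul_mul_neg (r : ℝ) : L.exp (r • X) * L.exp (-(r • X)) = 1 := by
  have h := L.exp_add_smul r (-r) X
  rw [add_neg_cancel, zero_smul, exp_zero, neg_smul] at h
  exact h.symm

lemma exp_inv (r : ℝ) : (L.exp (r • X))⁻¹ = L.exp (-(r • X)) := by
  rw [inv_eq_iff_mul_eq_one]
  exact exp_smul_mul_neg L X r

lemma stab_one : (1 : G) ∈ stab L X := by
  simp [stab]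

lemma stab_mul {g h : G} (hg : g ∈ stab L X) (hh : h ∈ stab L X) : g * h ∈ stab L X := by
  simp only [stab, Set.mem_setOf_eq, map_mul] at *
  show L.Ad g (L.Ad h X) = X
  rw [hh, hg]

lemma stab_inv {g : G} (hg : g ∈ stab L X) : g⁻¹ ∈ stab L X := by
  simp only [stab, Set.mem_setOf_eq, map_inv] at *
  conv_lhs => rw [← hg]
  show ((L.Ad g)⁻¹ * L.Ad g) X = X
  simp

lemma stab_conj_exp {g : G} (hg : g ∈ stab L X) (r : ℝ) :
    g * L.exp (r • X) * g⁻¹ = L.exp (r • X) := by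
  have h := L.exp_Ad g (r • X)
  have h2 : L.Ad g (r • X) = r • X := by
    rw [map_smul, hg]
  rw [h2] at h
  exact h.symm

lemma stab_comm_exp {g : G} (hg : g ∈ stab L X) (r : ℝ) :
    g * L.exp (r • X) = L.exp (r • X) * g := by
  have h := stab_conj_exp L X hg r
  calc g * L.exp (r • X) = g * L.exp (r • X) * g⁻¹ * g := by group
    _ = L.exp (r • X) * g := by rw [h]

lemma list_stab {l : List G} (hl : ∀ g ∈ l, g ∈ stab L X) : l.prod ∈ stab L X := by
  induction l with
  | nil => simpa using stab_one L X
  | cons a t ih =>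
    simp only [List.prod_cons]
    exact stab_mul L X (hl a (by simp)) (ih fun g hg => hl g (by simp [hg]))

lemma mm_stab {ℓ : ℕ} {V : Fin ℓ → G × G} (hV : tupleStab L X V) : mm V ∈ stab L X := by
  apply list_stab
  intro g hg
  rw [List.mem_ofFn] at hg
  obtain ⟨i, rfl⟩ := hg
  exact stab_mul L X (stab_mul L X (stab_mul L X (hV i).1 (hV i).2)
    (stab_inv L X (hV i).1)) (stab_inv L X (hV i).2)

lemma mm_append {ℓ m : ℕ} (V : Fin ℓ → G × G) (W : Fin m → G × G) :
    mm (Fin.append V W) = mm V * mm W := by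
  unfold mm
  rw [List.ofFn_add, List.prod_append]
  simp [Fin.append_left, Fin.append_right]

lemma mm_conjT {ℓ : ℕ} (c : G) (W : Fin ℓ → G × G) :
    mm (conjT c W) = c * mm W * c⁻¹ := by
  have hf : (fun i => ⁅(conjT c W i).1, (conjT c W i).2⁆) =
      ((MulAut.conj c : G → G) ∘ fun i : Fin ℓ => ⁅(W i).1, (W i).2⁆) := by
    funext i
    simp [conjT, map_commutatorElement]
  unfold mm
  rw [hf, ← List.map_ofFn, ← map_list_prod (MulAut.conj c)]
  simp

lemma ofFn_rev {n : ℕ} {α : Type*} (f : Fin n → α) :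
    List.ofFn (fun i => f i.rev) = (List.ofFn f).reverse := by
  apply List.ext_getElem
  · simp
  · intro i h1 h2
    simp only [List.getElem_ofFn, List.getElem_reverse]
    congr 1
    simp only [List.length_ofFn] at h1 h2 ⊢
    ext
    simp [Fin.rev]
    omega

lemma mm_rr {ℓ : ℕ} (W : Fin ℓ → G × G) : mm (rr W) = (mm W)⁻¹ := by
  have hf : (fun i => ⁅(rr W i).1, (rr W i).2⁆) =
      (fun i : Fin ℓ => ⁅(W i.rev).1, (W i.rev).2⁆⁻¹) := by
    funext i
    simp [rr, commutatorElement_inv]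
  have h2 : List.ofFn (fun i : Fin ℓ => ⁅(W i.rev).1, (W i.rev).2⁆⁻¹) =
      (List.ofFn (fun j : Fin ℓ => ⁅(W j).1, (W j).2⁆⁻¹)).reverse := by
    exact ofFn_rev fun j : Fin ℓ => ⁅(W j).1, (W j).2⁆⁻¹
  unfold mm
  rw [hf, h2, List.prod_inv_reverse]
  congr 1
  rw [List.map_ofFn]
  rfl

end Helpers

/-- `Φ(V,c,V̄,c̄,X) = (V, c·𝔯(V̄)·c⁻¹, X)` maps `Z^{ℓ,1}_{YM}(G)`
surjectively onto `X^{2ℓ,0}_{YM}(G)` (identifying `G^{2ℓ}×G^{2ℓ}` with `G^{4ℓ}`). -/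
theorem phi_image_eq_ym [CompactSpace G] (L : LieExpAd G 𝔤) (ℓ : ℕ) :
    (fun z : (Fin ℓ → G × G) × G × (Fin ℓ → G × G) × G × 𝔤 =>
        ((Fin.append z.1 (conjT z.2.1 (rr z.2.2.1)), z.2.2.2.2) :
          (Fin (ℓ + ℓ) → G × G) × 𝔤)) '' Z1set L ℓ = XymSet L (ℓ + ℓ) := by
  ext ⟨W, X⟩
  constructor
  · rintro ⟨⟨V, c, Vb, cb, X'⟩, hz, heq⟩
    simp only [Z1set, memZ1, Set.mem_setOf_eq] at hz
    obtain ⟨h1, h2, h3, h4⟩ := hz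
    simp only [Prod.mk.injEq] at heq
    obtain ⟨hW, hX⟩ := heq
    subst hW
    cases hX
    have hE : L.exp (-((1/2 : ℝ) • X)) = (L.exp ((1/2 : ℝ) • X))⁻¹ :=
      (exp_inv L X _).symm
    have hEE : L.exp ((1/2 : ℝ) • X) * L.exp ((1/2 : ℝ) • X) = L.exp X := by
      rw [← L.exp_add_smul]
      norm_num
    have hVs : mm V ∈ stab L X := mm_stab L X h1
    have hcomm : mm V * L.exp ((1/2 : ℝ) • X) = L.exp ((1/2 : ℝ) • X) * mm V :=
      stab_comm_exp L X hVs _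
    have hcomm' : c * cb * L.exp ((1/2 : ℝ) • X)
        = L.exp ((1/2 : ℝ) • X) * (c * cb) := by
      rw [h3] at hcomm
      calc c * cb * L.exp ((1/2 : ℝ) • X)
          = (L.exp ((1/2 : ℝ) • X))⁻¹ *
            (L.exp ((1/2 : ℝ) • X) * (c * cb) * L.exp ((1/2 : ℝ) • X)) := by group
        _ = (L.exp ((1/2 : ℝ) • X))⁻¹ *
            (L.exp ((1/2 : ℝ) • X) * (L.exp ((1/2 : ℝ) • X) * (c * cb))) := by
            rw [hcomm]
        _ = L.exp ((1/2 : ℝ) • X) * (c * cb) := by group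
    constructor
    · intro i
      refine Fin.addCases (fun j => ?_) (fun j => ?_) i
      · simpa [Fin.append_left] using h1 j
      · have := h2 j.rev
        simp only [conjT, rr, Fin.append_right] at *
        exact ⟨this.2, this.1⟩
    · show mm (Fin.append V (conjT c (rr Vb))) = L.exp X
      rw [mm_append, mm_conjT, mm_rr, h3, h4, hE]
      calc L.exp ((1/2 : ℝ) • X) * (c * cb) *
            (c * (cb * (L.exp ((1/2 : ℝ) • X))⁻¹ * c)⁻¹ * c⁻¹)
          = L.exp ((1/2 : ℝ) • X) * (c * cb * L.exp ((1/2 : ℝ) • X)) *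
            (cb⁻¹ * c⁻¹) := by group
        _ = L.exp ((1/2 : ℝ) • X) * (L.exp ((1/2 : ℝ) • X) * (c * cb)) *
            (cb⁻¹ * c⁻¹) := by rw [hcomm']
        _ = L.exp ((1/2 : ℝ) • X) * L.exp ((1/2 : ℝ) • X) := by group
        _ = L.exp X := hEE
  · rintro ⟨hst, hmm⟩
    set V : Fin ℓ → G × G := fun i => W (Fin.castAdd ℓ i) with hV
    set W2 : Fin ℓ → G × G := fun i => W (Fin.natAdd ℓ i) with hW2
    have hE : L.exp (-((1/2 : ℝ) • X)) = (L.exp ((1/2 : ℝ) • X))⁻¹ :=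
      (exp_inv L X _).symm
    have hEE : L.exp ((1/2 : ℝ) • X) * L.exp ((1/2 : ℝ) • X) = L.exp X := by
      rw [← L.exp_add_smul]
      norm_num
    have hVs : mm V ∈ stab L X := mm_stab L X (fun i => hst (Fin.castAdd ℓ i))
    have hcomm : mm V * L.exp ((1/2 : ℝ) • X) = L.exp ((1/2 : ℝ) • X) * mm V :=
      stab_comm_exp L X hVs _
    have hWeq : Fin.append V W2 = W := by
      funext i
      refine Fin.addCases (fun j => ?_) (fun j => ?_) i
      · rw [Fin.append_left]
      · rw [Fin.append_right]
    have hmm2 : mm V * mm W2 = L.exp X := by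
      rw [← mm_append, hWeq]
      exact hmm
    refine ⟨⟨V, 1, rr W2, L.exp (-((1/2 : ℝ) • X)) * mm V, X⟩, ⟨?_, ?_, ?_, ?_⟩, ?_⟩
    · exact fun i => hst (Fin.castAdd ℓ i)
    · intro i
      have := hst (Fin.natAdd ℓ i.rev)
      simp only [conjT, rr, one_mul, inv_one, mul_one]
      exact ⟨this.2, this.1⟩
    · rw [hE]
      group
    · rw [mm_rr, hE]
      have : mm W2 = (mm V)⁻¹ * L.exp X := by
        rw [← hmm2]; group
      have hcommInv : mm V * (L.exp ((1/2 : ℝ) • X))⁻¹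
          = (L.exp ((1/2 : ℝ) • X))⁻¹ * mm V := by
        calc mm V * (L.exp ((1/2 : ℝ) • X))⁻¹
            = (L.exp ((1/2 : ℝ) • X))⁻¹ * (L.exp ((1/2 : ℝ) • X) * mm V) *
              (L.exp ((1/2 : ℝ) • X))⁻¹ := by group
          _ = (L.exp ((1/2 : ℝ) • X))⁻¹ * (mm V * L.exp ((1/2 : ℝ) • X)) *
              (L.exp ((1/2 : ℝ) • X))⁻¹ := by rw [hcomm]
          _ = (L.exp ((1/2 : ℝ) • X))⁻¹ * mm V := by group
      rw [this, ← hEE]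
      calc ((mm V)⁻¹ * (L.exp ((1/2 : ℝ) • X) * L.exp ((1/2 : ℝ) • X)))⁻¹
          = (L.exp ((1/2 : ℝ) • X))⁻¹ * ((L.exp ((1/2 : ℝ) • X))⁻¹ * mm V) := by
            group
        _ = (L.exp ((1/2 : ℝ) • X))⁻¹ * (mm V * (L.exp ((1/2 : ℝ) • X))⁻¹) := by
            rw [← hcommInv]
        _ = (L.exp ((1/2 : ℝ) • X))⁻¹ * mm V * (L.exp ((1/2 : ℝ) • X))⁻¹ * 1 := by
            group
    · simp only [Prod.mk.injEq]
      constructor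
      · have hrr : rr (rr W2) = W2 := by
          funext i
          simp [rr, Fin.rev_rev]
        have hc1 : conjT (1 : G) (rr (rr W2)) = W2 := by
          rw [hrr]
          funext i
          simp [conjT]
        rw [hc1, hWeq]
      · trivial
end

section
/- Let G be a compact Lie group with Lie algebra 𝔤. The map (V, d, c, X) ↦ (V, d, c, V, d, c, 2X) is a bijection from X^{ℓ,2}_{YM}(G) = {(V,d,c,X) ∈ G^{2ℓ}×G×G×𝔤 | V ∈ (G_X)^{2ℓ}, d ∈ G_X, Ad(c)(X) = -X, 𝔪(V) = exp(X)·c·d·c^{-1}·d} onto the fixed-point set of the involution τ(V,d,c,V̄,d̄,c̄,X) = (V̄,d̄,c̄,V,d,c,-Ad(c̄)X) in Z^{ℓ,2}_{YM}(G). -/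
variable {G 𝔤 : Type*} [Group G] [TopologicalSpace G] [IsTopologicalGroup G]
  [AddCommGroup 𝔤] [Module ℝ 𝔤]

open scoped commutatorElement

/-- The set `Z^{ℓ,2}_{YM}(G)`. -/
def Z2set (L : LieExpAd G 𝔤) (ℓ : ℕ) :
    Set ((Fin ℓ → G × G) × G × G × (Fin ℓ → G × G) × G × G × 𝔤) :=
  {z | memZ2 L z.1 z.2.1 z.2.2.1 z.2.2.2.1 z.2.2.2.2.1 z.2.2.2.2.2.1
    z.2.2.2.2.2.2}

/-- `τ(V,d,c,V̄,d̄,c̄,X) = (V̄,d̄,c̄,V,d,c,-Ad(c̄)X)`. -/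
def tau2 (L : LieExpAd G 𝔤) {ℓ : ℕ}
    (z : (Fin ℓ → G × G) × G × G × (Fin ℓ → G × G) × G × G × 𝔤) :
    (Fin ℓ → G × G) × G × G × (Fin ℓ → G × G) × G × G × 𝔤 :=
  (z.2.2.2.1, z.2.2.2.2.1, z.2.2.2.2.2.1, z.1, z.2.1, z.2.2.1,
    -(L.Ad z.2.2.2.2.2.1 z.2.2.2.2.2.2))

/-- The representation variety `X^{ℓ,2}_{YM}(G)`. -/
def X2set (L : LieExpAd G 𝔤) (ℓ : ℕ) : Set ((Fin ℓ → G × G) × G × G × 𝔤) :=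
  {w | tupleStab L w.2.2.2 w.1 ∧ w.2.1 ∈ stab L w.2.2.2 ∧
    L.Ad w.2.2.1 w.2.2.2 = -w.2.2.2 ∧
    mm w.1 = L.exp w.2.2.2 * (w.2.2.1 * w.2.1 * w.2.2.1⁻¹ * w.2.1)}


private lemma Ad_mul_apply (L : LieExpAd G 𝔤) (g h : G) (X : 𝔤) :
    L.Ad (g * h) X = L.Ad g (L.Ad h X) := by
  rw [map_mul]; rfl

private lemma Ad_inv_apply (L : LieExpAd G 𝔤) (g : G) {X Y : 𝔤}
    (h : L.Ad g X = Y) : L.Ad g⁻¹ Y = X := by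
  rw [← h, ← Ad_mul_apply, inv_mul_cancel, map_one]; rfl

private lemma half_two (X : 𝔤) : (1/2 : ℝ) • ((2 : ℝ) • X) = X := by
  rw [smul_smul]; norm_num

private lemma two_half (X : 𝔤) : (2 : ℝ) • ((1/2 : ℝ) • X) = X := by
  rw [smul_smul]; norm_num

private lemma stab_smul (L : LieExpAd G 𝔤) {X : 𝔤} {g : G} (r : ℝ)
    (h : L.Ad g X = X) : L.Ad g (r • X) = r • X := by
  rw [map_smul, h]

private lemma conj_stab (L : LieExpAd G 𝔤) {g a : G} {X : 𝔤}
    (hg : L.Ad g X = -X) (ha : L.Ad a X = X) : L.Ad (g * a * g⁻¹) X = X := by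
  have hg' : L.Ad g⁻¹ X = -X := by
    have h0 : L.Ad g (-X) = X := by rw [map_neg, hg, neg_neg]
    exact Ad_inv_apply L g h0
  rw [Ad_mul_apply, Ad_mul_apply, hg', map_neg, ha, map_neg, hg, neg_neg]

/-- `(V,d,c,X) ↦ (V,d,c,V,d,c,2X)` is a bijection from
`X^{ℓ,2}_{YM}(G)` onto the fixed-point set of `τ` in `Z^{ℓ,2}_{YM}(G)`. -/
theorem X2_bij_fixed [CompactSpace G] (L : LieExpAd G 𝔤) (ℓ : ℕ) :
    Set.BijOn
      (fun w : (Fin ℓ → G × G) × G × G × 𝔤 =>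
        ((w.1, w.2.1, w.2.2.1, w.1, w.2.1, w.2.2.1, (2 : ℝ) • w.2.2.2) :
          (Fin ℓ → G × G) × G × G × (Fin ℓ → G × G) × G × G × 𝔤))
      (X2set L ℓ) {z ∈ Z2set L ℓ | tau2 L z = z} := by
  refine ⟨?_, ?_, ?_⟩
  · -- MapsTo
    rintro ⟨V, d, c, X⟩ ⟨hV, hd, hc, hm⟩
    have hdi : L.Ad d⁻¹ X = X := Ad_inv_apply L d hd
    have hci : L.Ad c⁻¹ X = -X := by
      have h0 : L.Ad c (-X) = X := by rw [map_neg, hc, neg_neg]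
      exact Ad_inv_apply L c h0
    have hg : L.Ad (d⁻¹ * c) X = -X := by rw [Ad_mul_apply, hc, map_neg, hdi]
    refine ⟨⟨?_, ?_, ?_, ?_, ?_, ?_⟩, ?_⟩
    · intro i
      exact ⟨stab_smul L 2 (hV i).1, stab_smul L 2 (hV i).2⟩
    · intro i
      exact ⟨stab_smul L 2 (conj_stab L hg (hV i).1),
        stab_smul L 2 (conj_stab L hg (hV i).2)⟩
    · exact stab_smul L 2 hdi
    · show L.Ad (c * c) ((2 : ℝ) • X) = (2 : ℝ) • X
      simp only [Ad_mul_apply, map_smul, hc, map_neg, neg_neg]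
    · show mm V = _
      rw [half_two, hm]
    · show mm V = c * d * L.exp (-((1/2 : ℝ) • ((2 : ℝ) • X))) * c⁻¹ * d
      rw [half_two]
      have e1 : L.exp (-X) = c⁻¹ * L.exp X * c := by
        have := L.exp_Ad c⁻¹ X
        rw [hci, inv_inv] at this
        exact this
      have e2 : L.exp (-X) = d⁻¹ * L.exp (-X) * d := by
        have h0 : L.Ad d⁻¹ (-X) = -X := by rw [map_neg, hdi]
        have := L.exp_Ad d⁻¹ (-X)
        rw [h0, inv_inv] at this
        exact this
      rw [hm, e2, e1]
      group
    · show tau2 L _ = _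
      simp only [tau2]
      rw [map_smul, hc, smul_neg, neg_neg]
  · -- InjOn
    rintro ⟨V1, d1, c1, X1⟩ _ ⟨V2, d2, c2, X2⟩ _ h
    simp only [Prod.mk.injEq] at h
    obtain ⟨h1, h2, h3, -, -, -, h7⟩ := h
    have hX : X1 = X2 := by
      have := congrArg (fun Y => (1/2 : ℝ) • Y) h7
      simpa only [half_two] using this
    simp [h1, h2, h3, hX]
  · -- SurjOn
    rintro ⟨V, d, c, Vb, db, cb, X⟩ ⟨hz, htau⟩
    simp only [tau2, Prod.mk.injEq] at htau
    obtain ⟨h1, h2, h3, -, -, -, h7⟩ := htau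
    subst h1; subst h2; subst h3
    obtain ⟨hV, -, hdinv, -, hm1, -⟩ := hz
    have hcX : L.Ad cb X = -X := neg_eq_iff_eq_neg.mp h7
    have hdX : L.Ad db X = X := by
      have := Ad_inv_apply L db⁻¹ hdinv
      rwa [inv_inv] at this
    refine ⟨(Vb, db, cb, (1/2 : ℝ) • X), ⟨?_, ?_, ?_, ?_⟩, ?_⟩
    · intro i
      exact ⟨stab_smul L (1/2) (hV i).1, stab_smul L (1/2) (hV i).2⟩
    · exact stab_smul L (1/2) hdX
    · show L.Ad cb ((1/2 : ℝ) • X) = -((1/2 : ℝ) • X)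
      rw [map_smul, hcX, smul_neg]
    · exact hm1
    · simp only [two_half]
end
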